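/- arXiv:2102.00048 — 2 statements merged into one kernel-verified Lean document; each statement's English description precedes it below -/
import Mathlib

section
/- Let X be a compact metric space with distance d, and let (d_n) be a sequence of distances on X with |d_n(x,y) − d(x,y)| < ε_n for all x,y, where ε_n → 0. Suppose for each n, γ_n : [0,1] → X is a constant speed d_n-geodesic from x to y, and γ_n converges pointwise on [0,1]∩ℚ to a function γ. Then γ extends to a constant speed d-geodesic from x to y, i.e., d(γ(s),γ(t)) = d(x,y)|t−s| for all s,t ∈ [0,1]. -/
open Filter Topology

/-- A symmetric, triangle-inequality-satisfying, positive-definite distance function. -/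
def IsDistanceFun {X : Type*} (ρ : X → X → ℝ) : Prop :=
  (∀ a b, 0 ≤ ρ a b) ∧ (∀ a b, ρ a b = ρ b a) ∧
  (∀ a b c, ρ a c ≤ ρ a b + ρ b c) ∧ (∀ a b, ρ a b = 0 ↔ a = b)

/-- Let `X` be a compact metric space, `d_n` distances with `|d_n − d| < ε_n → 0`, and
`γ_n` constant speed `d_n`-geodesics from `x` to `y` converging pointwise on `[0,1] ∩ ℚ`
to `γ`. Then `γ` extends to a constant speed `d`-geodesic from `x` to `y`. -/
theorem stmt3 {X : Type*} [MetricSpace X] [CompactSpace X]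
    (dn : ℕ → X → X → ℝ) (hdn : ∀ n, IsDistanceFun (dn n))
    (ε : ℕ → ℝ) (hε : Tendsto ε atTop (𝓝 0))
    (hclose : ∀ n a b, |dn n a b - dist a b| < ε n)
    (x y : X) (γn : ℕ → ℝ → X)
    (hgeo : ∀ n, γn n 0 = x ∧ γn n 1 = y ∧
      ∀ s ∈ Set.Icc (0:ℝ) 1, ∀ t ∈ Set.Icc (0:ℝ) 1,
        dn n (γn n s) (γn n t) = dn n x y * |t - s|)
    (γ : ℝ → X)
    (hconv : ∀ q : ℚ, (q : ℝ) ∈ Set.Icc (0:ℝ) 1 →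
      Tendsto (fun n => γn n q) atTop (𝓝 (γ q))) :
    ∃ γbar : ℝ → X,
      (∀ q : ℚ, (q : ℝ) ∈ Set.Icc (0:ℝ) 1 → γbar q = γ q) ∧
      γbar 0 = x ∧ γbar 1 = y ∧
      ∀ s ∈ Set.Icc (0:ℝ) 1, ∀ t ∈ Set.Icc (0:ℝ) 1,
        dist (γbar s) (γbar t) = dist x y * |t - s| := by
  have hdnxy : Tendsto (fun n => dn n x y) atTop (𝓝 (dist x y)) := by
    have h0 : Tendsto (fun n => dn n x y - dist x y) atTop (𝓝 0) :=
      squeeze_zero_norm (fun n => by simpa using (hclose n x y).le) hε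
    simpa using h0.add_const (dist x y)
  -- Key lemma: the limit curve is a geodesic on rational times
  have key : ∀ q : ℚ, (q:ℝ) ∈ Set.Icc (0:ℝ) 1 → ∀ r : ℚ, (r:ℝ) ∈ Set.Icc (0:ℝ) 1 →
      dist (γ q) (γ r) = dist x y * |(r:ℝ) - q| := by
    intro q hq r hr
    have h1 : Tendsto (fun n => dist (γn n q) (γn n r)) atTop (𝓝 (dist (γ q) (γ r))) :=
      (hconv q hq).dist (hconv r hr)
    have h2 : Tendsto (fun n => dn n (γn n q) (γn n r) - dist (γn n q) (γn n r)) atTop (𝓝 0) :=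
      squeeze_zero_norm (fun n => by simpa using (hclose n _ _).le) hε
    have h3 : Tendsto (fun n => dn n (γn n q) (γn n r)) atTop (𝓝 (dist (γ q) (γ r))) := by
      simpa using h2.add h1
    have heq : (fun n => dn n (γn n q) (γn n r)) = fun n => dn n x y * |(r:ℝ) - q| := by
      funext n
      exact (hgeo n).2.2 q hq r hr
    rw [heq] at h3
    exact tendsto_nhds_unique h3 (hdnxy.mul_const _)
  -- Rational approximations
  set qa : ℝ → ℕ → ℚ := fun t k => (⌊t * ((k:ℝ)+1)⌋ : ℚ) / ((k:ℚ)+1) with hqa_def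
  have hk : ∀ k : ℕ, (0:ℝ) < (k:ℝ)+1 := fun k => by positivity
  have hqa_cast : ∀ t k, ((qa t k : ℚ) : ℝ) = (⌊t * ((k:ℝ)+1)⌋ : ℝ) / ((k:ℝ)+1) := by
    intro t k
    simp only [hqa_def]
    push_cast
    ring
  have hqa_mem : ∀ t ∈ Set.Icc (0:ℝ) 1, ∀ k, ((qa t k : ℚ):ℝ) ∈ Set.Icc (0:ℝ) 1 := by
    intro t ht k
    rw [hqa_cast]
    constructor
    · apply div_nonneg _ (hk k).le
      have : (0:ℤ) ≤ ⌊t * ((k:ℝ)+1)⌋ := Int.floor_nonneg.2 (mul_nonneg ht.1 (hk k).le)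
      exact_mod_cast this
    · rw [div_le_one (hk k)]
      calc ((⌊t * ((k:ℝ)+1)⌋:ℝ)) ≤ t * ((k:ℝ)+1) := Int.floor_le _
        _ ≤ 1 * ((k:ℝ)+1) := by nlinarith [ht.2, (hk k).le]
        _ = (k:ℝ)+1 := one_mul _
  have hqa_close : ∀ t k, |((qa t k:ℚ):ℝ) - t| ≤ 1/((k:ℝ)+1) := by
    intro t k
    have h1 : ((⌊t * ((k:ℝ)+1)⌋:ℝ)) ≤ t * ((k:ℝ)+1) := Int.floor_le _
    have h2 : t * ((k:ℝ)+1) < (⌊t * ((k:ℝ)+1)⌋:ℝ) + 1 := Int.lt_floor_add_one _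
    have hkpos := hk k
    rw [hqa_cast]
    have heq : (⌊t * ((k:ℝ)+1)⌋:ℝ)/((k:ℝ)+1) - t
        = ((⌊t * ((k:ℝ)+1)⌋:ℝ) - t * ((k:ℝ)+1))/((k:ℝ)+1) := by
      field_simp
    rw [heq, abs_div, abs_of_pos hkpos]
    gcongr
    rw [abs_le]
    constructor <;> linarith
  have tendsto_one_div : Tendsto (fun k : ℕ => 1/((k:ℝ)+1)) atTop (𝓝 0) :=
    tendsto_one_div_add_atTop_nhds_zero_nat
  have hqa_tendsto : ∀ t : ℝ, Tendsto (fun k => ((qa t k:ℚ):ℝ)) atTop (𝓝 t) := by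
    intro t
    have h0 : Tendsto (fun k => ((qa t k:ℚ):ℝ) - t) atTop (𝓝 0) :=
      squeeze_zero_norm (fun k => by simpa using hqa_close t k) tendsto_one_div
    simpa using h0.add_const t
  -- the approximating sequences of points converge
  have hex : ∀ t : ℝ, t ∈ Set.Icc (0:ℝ) 1 →
      ∃ a, Tendsto (fun k => γ (qa t k)) atTop (𝓝 a) := by
    intro t ht
    apply cauchySeq_tendsto_of_complete
    refine cauchySeq_of_le_tendsto_0 (fun N => dist x y * (2 * (1/((N:ℝ)+1)))) ?_ ?_
    · intro n m N hn hm
      rw [key _ (hqa_mem t ht n) _ (hqa_mem t ht m)]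
      have hb : |((qa t m:ℚ):ℝ) - (qa t n:ℚ)| ≤ 2 * (1/((N:ℝ)+1)) := by
        have e1 := hqa_close t m
        have e2 := hqa_close t n
        have e3 : 1/((m:ℝ)+1) ≤ 1/((N:ℝ)+1) := by
          apply one_div_le_one_div_of_le (hk N)
          have : (N:ℝ) ≤ m := by exact_mod_cast hm
          linarith
        have e4 : 1/((n:ℝ)+1) ≤ 1/((N:ℝ)+1) := by
          apply one_div_le_one_div_of_le (hk N)
          have : (N:ℝ) ≤ n := by exact_mod_cast hn
          linarith
        calc |((qa t m:ℚ):ℝ) - (qa t n:ℚ)|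
            ≤ |((qa t m:ℚ):ℝ) - t| + |((qa t n:ℚ):ℝ) - t| := by
              have := abs_sub (((qa t m:ℚ):ℝ)) (((qa t n:ℚ):ℝ))
              calc |((qa t m:ℚ):ℝ) - (qa t n:ℚ)|
                  = |(((qa t m:ℚ):ℝ) - t) - (((qa t n:ℚ):ℝ) - t)| := by ring_nf
                _ ≤ |((qa t m:ℚ):ℝ) - t| + |((qa t n:ℚ):ℝ) - t| := abs_sub _ _
          _ ≤ 1/((m:ℝ)+1) + 1/((n:ℝ)+1) := add_le_add e1 e2
          _ ≤ 2 * (1/((N:ℝ)+1)) := by linarith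
      exact mul_le_mul_of_nonneg_left hb dist_nonneg
    · have : Tendsto (fun N : ℕ => dist x y * (2 * (1/((N:ℝ)+1)))) atTop
          (𝓝 (dist x y * (2 * 0))) :=
        ((tendsto_one_div.const_mul 2).const_mul (dist x y))
      simpa using this
  choose c hc using hex
  -- on rational points the limit is γ itself
  have hfix : ∀ (q : ℚ) (h : ((q:ℝ)) ∈ Set.Icc (0:ℝ) 1), c (q:ℝ) h = γ q := by
    intro q hq
    have hb : ∀ k, dist (γ ((qa (q:ℝ) k:ℚ):ℝ)) (γ (q:ℝ)) ≤ dist x y * (1/((k:ℝ)+1)) := by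
      intro k
      rw [key _ (hqa_mem _ hq k) q hq]
      have hab : |(q:ℝ) - ((qa (q:ℝ) k:ℚ):ℝ)| ≤ 1/((k:ℝ)+1) := by
        rw [abs_sub_comm]; exact hqa_close _ _
      exact mul_le_mul_of_nonneg_left hab dist_nonneg
    have hlim : Tendsto (fun k => γ ((qa (q:ℝ) k:ℚ):ℝ)) atTop (𝓝 (γ q)) := by
      rw [tendsto_iff_dist_tendsto_zero]
      refine squeeze_zero (fun k => dist_nonneg) hb ?_
      simpa using tendsto_one_div.const_mul (dist x y)
    exact tendsto_nhds_unique (hc _ hq) hlim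
  have hγ0 : γ ((0:ℚ):ℝ) = x := by
    have h0m : ((0:ℚ):ℝ) ∈ Set.Icc (0:ℝ) 1 := by norm_num
    refine tendsto_nhds_unique (hconv 0 h0m) ?_
    have he : (fun n => γn n ((0:ℚ):ℝ)) = fun _ => x := funext fun n => by
      simpa using (hgeo n).1
    rw [he]; exact tendsto_const_nhds
  have hγ1 : γ ((1:ℚ):ℝ) = y := by
    have h1m : ((1:ℚ):ℝ) ∈ Set.Icc (0:ℝ) 1 := by norm_num
    refine tendsto_nhds_unique (hconv 1 h1m) ?_
    have he : (fun n => γn n ((1:ℚ):ℝ)) = fun _ => y := funext fun n => by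
      simpa using (hgeo n).2.1
    rw [he]; exact tendsto_const_nhds
  refine ⟨fun t => if h : t ∈ Set.Icc (0:ℝ) 1 then c t h else x, ?_, ?_, ?_, ?_⟩
  · intro q hq
    simp only [dif_pos hq]
    exact hfix q hq
  · have h0q : ((0:ℚ):ℝ) ∈ Set.Icc (0:ℝ) 1 := by norm_num
    calc (fun t => if h : t ∈ Set.Icc (0:ℝ) 1 then c t h else x) 0
        = (fun t => if h : t ∈ Set.Icc (0:ℝ) 1 then c t h else x) ((0:ℚ):ℝ) := by
          rw [Rat.cast_zero]
      _ = γ ((0:ℚ):ℝ) := by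
          simp only [dif_pos h0q]
          exact hfix 0 h0q
      _ = x := hγ0
  · have h1q : ((1:ℚ):ℝ) ∈ Set.Icc (0:ℝ) 1 := by norm_num
    calc (fun t => if h : t ∈ Set.Icc (0:ℝ) 1 then c t h else x) 1
        = (fun t => if h : t ∈ Set.Icc (0:ℝ) 1 then c t h else x) ((1:ℚ):ℝ) := by
          rw [Rat.cast_one]
      _ = γ ((1:ℚ):ℝ) := by
          simp only [dif_pos h1q]
          exact hfix 1 h1q
      _ = y := hγ1
  · intro s hs t ht
    simp only [dif_pos hs, dif_pos ht]
    have h1 : Tendsto (fun k => dist (γ ((qa s k:ℚ):ℝ)) (γ ((qa t k:ℚ):ℝ))) atTop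
        (𝓝 (dist (c s hs) (c t ht))) := (hc s hs).dist (hc t ht)
    have heq : (fun k => dist (γ ((qa s k:ℚ):ℝ)) (γ ((qa t k:ℚ):ℝ)))
        = fun k => dist x y * |((qa t k:ℚ):ℝ) - ((qa s k:ℚ):ℝ)| :=
      funext fun k => key _ (hqa_mem s hs k) _ (hqa_mem t ht k)
    rw [heq] at h1
    have h2 : Tendsto (fun k => dist x y * |((qa t k:ℚ):ℝ) - ((qa s k:ℚ):ℝ)|) atTop
        (𝓝 (dist x y * |t - s|)) :=
      (((hqa_tendsto t).sub (hqa_tendsto s)).abs).const_mul _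
    exact tendsto_nhds_unique h1 h2
end

section
/- Let d be the crystalline distance and d_n distances on ℝ^N induced by smooth uniformly convex norms with d_n ≤ H·d, d_n² → d² locally uniformly, and n(d_n² − d²) → d_eu² locally uniformly with n(d_n² − d²) ≤ 2 d_eu². Let μ, ν ∈ P_ac(ℝ^N) and π_n the unique d_n²-optimal plan. Then every weak subsequential limit π of (π_n) is a minimizer of the secondary variational problem: π minimizes ∫ d_eu² dπ over all d²-optimal plans in Γ(μ,ν). -/
open MeasureTheory Filter Topology
open scoped ENNReal

noncomputable section

def IsCoupling {α : Type*} [MeasurableSpace α] (π : Measure (α × α)) (μ ν : Measure α) : Prop :=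
  π.map Prod.fst = μ ∧ π.map Prod.snd = ν

def transportCost {α : Type*} [MeasurableSpace α] (c : α → α → ℝ≥0∞)
    (π : Measure (α × α)) : ℝ≥0∞ :=
  ∫⁻ p, c p.1 p.2 ∂π

def IsOptimalPlan {α : Type*} [MeasurableSpace α] (c : α → α → ℝ≥0∞) (μ ν : Measure α)
    (π : Measure (α × α)) : Prop :=
  IsCoupling π μ ν ∧ ∀ π', IsCoupling π' μ ν → transportCost c π ≤ transportCost c π'

/-- The crystalline distance `d(x,y) = max_{v ∈ 𝒱} ⟨x−y, v⟩` associated to a finite set of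
vectors `𝒱`. -/
def crysDist {N : ℕ} (V : Finset (EuclideanSpace ℝ (Fin N))) (hV : V.Nonempty)
    (x y : EuclideanSpace ℝ (Fin N)) : ℝ :=
  V.sup' hV fun v => (inner ℝ (x - y) v : ℝ)

/-- Minimizers of the primary problem: optimal plans for the crystalline cost `d²`. -/
def Pi1 {N : ℕ} (V : Finset (EuclideanSpace ℝ (Fin N))) (hV : V.Nonempty)
    (μ ν : Measure (EuclideanSpace ℝ (Fin N))) (π : Measure (EuclideanSpace ℝ (Fin N) × EuclideanSpace ℝ (Fin N))) : Prop :=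
  IsOptimalPlan (fun a b => ENNReal.ofReal (crysDist V hV a b ^ 2)) μ ν π

/-- Minimizers of the secondary variational problem: among plans in `Π₁(μ,ν)`, those
minimizing the Euclidean cost `∫ d_eu² dπ`. -/
def Pi2 {N : ℕ} (V : Finset (EuclideanSpace ℝ (Fin N))) (hV : V.Nonempty)
    (μ ν : Measure (EuclideanSpace ℝ (Fin N))) (π : Measure (EuclideanSpace ℝ (Fin N) × EuclideanSpace ℝ (Fin N))) : Prop :=
  Pi1 V hV μ ν π ∧ ∀ π', Pi1 V hV μ ν π' →
    transportCost (fun a b => ENNReal.ofReal (dist a b ^ 2)) π ≤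
      transportCost (fun a b => ENNReal.ofReal (dist a b ^ 2)) π'


lemma sup'_mul_left_aux {ι : Type*} (s : Finset ι) (hs : s.Nonempty) (f : ι → ℝ) {c : ℝ}
    (hc : 0 ≤ c) : s.sup' hs (fun i => c * f i) = c * s.sup' hs f := by
  obtain ⟨i0, hi0, h0⟩ := Finset.exists_mem_eq_sup' hs f
  apply le_antisymm
  · exact Finset.sup'_le _ _ fun i hi => mul_le_mul_of_nonneg_left (Finset.le_sup' f hi) hc
  · rw [h0]; exact Finset.le_sup' (fun i => c * f i) hi0

section CrysFacts

variable {N : ℕ} (V : Finset (EuclideanSpace ℝ (Fin N))) (hV : V.Nonempty)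

lemma crysDist_diff (x y : EuclideanSpace ℝ (Fin N)) :
    crysDist V hV x y = crysDist V hV (x - y) 0 := by
  simp [crysDist, sub_zero]

lemma crysDist_zero : crysDist V hV 0 0 = 0 := by
  simp [crysDist, Finset.sup'_const]

lemma crysDist_nonneg (hVsymm : ∀ v ∈ V, -v ∈ V) (x y : EuclideanSpace ℝ (Fin N)) :
    0 ≤ crysDist V hV x y := by
  obtain ⟨v0, hv0⟩ := id hV
  have h1 : (inner ℝ (x - y) v0 : ℝ) ≤ crysDist V hV x y := Finset.le_sup' _ hv0
  have h2 : (inner ℝ (x - y) (-v0) : ℝ) ≤ crysDist V hV x y := Finset.le_sup' _ (hVsymm v0 hv0)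
  rw [inner_neg_right] at h2
  linarith

lemma crysDist_smul (c : ℝ) (hc : 0 ≤ c) (z : EuclideanSpace ℝ (Fin N)) :
    crysDist V hV (c • z) 0 = c * crysDist V hV z 0 := by
  unfold crysDist
  rw [← sup'_mul_left_aux V hV _ hc]
  apply Finset.sup'_congr hV rfl
  intro v _
  rw [sub_zero, sub_zero, real_inner_smul_left]

lemma crysDist_le (x y : EuclideanSpace ℝ (Fin N)) :
    crysDist V hV x y ≤ (V.sup' hV fun v => ‖v‖) * ‖x - y‖ := by
  apply Finset.sup'_le
  intro v hv
  calc (inner ℝ (x - y) v : ℝ) ≤ ‖x - y‖ * ‖v‖ := real_inner_le_norm _ _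
    _ ≤ ‖x - y‖ * (V.sup' hV fun v => ‖v‖) :=
        mul_le_mul_of_nonneg_left (Finset.le_sup' _ hv) (norm_nonneg _)
    _ = _ := mul_comm _ _

lemma crysDist_continuous : Continuous fun p : EuclideanSpace ℝ (Fin N) × EuclideanSpace ℝ (Fin N) =>
    crysDist V hV p.1 p.2 := by
  unfold crysDist
  apply Continuous.finset_sup'_apply hV
  intro v _
  exact Continuous.inner (continuous_fst.sub continuous_snd) continuous_const

end CrysFacts

lemma portmanteau_aux {γ : Type*} [MeasurableSpace γ] [TopologicalSpace γ]
    [OpensMeasurableSpace γ]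
    (πs : ℕ → Measure γ) (π : Measure γ) [IsFiniteMeasure π]
    (hfin : ∀ n, IsFiniteMeasure (πs n))
    (f : γ → ℝ) (hf : Continuous f) (hf0 : ∀ x, 0 ≤ f x)
    (hweak : ∀ g : BoundedContinuousFunction γ ℝ,
      Tendsto (fun n => ∫ p, g p ∂(πs n)) atTop (nhds (∫ p, g p ∂π))) :
    ∫⁻ x, ENNReal.ofReal (f x) ∂π ≤
      atTop.liminf (fun n => ∫⁻ x, ENNReal.ofReal (f x) ∂(πs n)) := by
  have hmeas : ∀ R : ℕ, Measurable fun x => ENNReal.ofReal (min (f x) R) := fun R =>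
    ENNReal.measurable_ofReal.comp (hf.min continuous_const).measurable
  have hmono : Monotone fun (R : ℕ) (x : γ) => ENNReal.ofReal (min (f x) R) := by
    intro a b hab
    intro x
    exact ENNReal.ofReal_le_ofReal (min_le_min le_rfl (by exact_mod_cast hab))
  have hsup : (fun x => ENNReal.ofReal (f x)) =
      fun x => ⨆ R : ℕ, ENNReal.ofReal (min (f x) R) := by
    funext x
    refine le_antisymm ?_ (iSup_le fun R => ENNReal.ofReal_le_ofReal (min_le_left _ _))
    calc ENNReal.ofReal (f x) = ENNReal.ofReal (min (f x) ⌈f x⌉₊) := by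
          rw [min_eq_left (Nat.le_ceil _)]
      _ ≤ _ := le_iSup (fun R : ℕ => ENNReal.ofReal (min (f x) R)) ⌈f x⌉₊
  have hπsup : ∫⁻ x, ENNReal.ofReal (f x) ∂π =
      ⨆ R : ℕ, ∫⁻ x, ENNReal.ofReal (min (f x) R) ∂π := by
    rw [← lintegral_iSup hmeas hmono]
    exact lintegral_congr fun x => congrFun hsup x
  rw [hπsup]
  refine iSup_le fun R => ?_
  set G : BoundedContinuousFunction γ ℝ :=
    BoundedContinuousFunction.mkOfBound ⟨fun x => min (f x) R, hf.min continuous_const⟩ R (by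
      intro x y
      simp only [ContinuousMap.coe_mk, Real.dist_eq, abs_sub_le_iff]
      have h1 : (0:ℝ) ≤ min (f x) (R:ℝ) := le_min (hf0 x) (Nat.cast_nonneg R)
      have h2 := min_le_right (f x) (R:ℝ)
      have h3 : (0:ℝ) ≤ min (f y) (R:ℝ) := le_min (hf0 y) (Nat.cast_nonneg R)
      have h4 := min_le_right (f y) (R:ℝ)
      constructor <;> linarith) with hG
  have hGeq : ∀ (m : Measure γ), IsFiniteMeasure m →
      ∫⁻ x, ENNReal.ofReal (min (f x) R) ∂m = ENNReal.ofReal (∫ x, G x ∂m) := by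
    intro m hm
    rw [MeasureTheory.ofReal_integral_eq_lintegral_ofReal (G.integrable m)
      (ae_of_all _ fun x => le_min (hf0 x) (by positivity))]
    rfl
  have hc : Tendsto (fun n => ∫⁻ x, ENNReal.ofReal (min (f x) R) ∂(πs n)) atTop
      (nhds (∫⁻ x, ENNReal.ofReal (min (f x) R) ∂π)) := by
    have heq : (fun n => ∫⁻ x, ENNReal.ofReal (min (f x) R) ∂(πs n)) =
        fun n => ENNReal.ofReal (∫ x, G x ∂(πs n)) := by
      funext n; exact hGeq (πs n) (hfin n)
    rw [heq, hGeq π ‹_›]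
    exact (ENNReal.continuous_ofReal.tendsto _).comp (hweak G)
  calc ∫⁻ x, ENNReal.ofReal (min (f x) R) ∂π
      = atTop.liminf (fun n => ∫⁻ x, ENNReal.ofReal (min (f x) R) ∂(πs n)) := hc.liminf_eq.symm
    _ ≤ _ := liminf_le_liminf (Eventually.of_forall fun n =>
        lintegral_mono fun x => ENNReal.ofReal_le_ofReal (min_le_left _ _))

lemma key_aux {N : ℕ} (V : Finset (EuclideanSpace ℝ (Fin N))) (hV : V.Nonempty)
    (Nn : ℕ → EuclideanSpace ℝ (Fin N) → ℝ)
    (hNn0 : ∀ n x, Nn n x = 0 ↔ x = 0)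
    (hNnabs : ∀ n (a : ℝ) x, Nn n (a • x) = |a| * Nn n x)
    (hrescconv : TendstoLocallyUniformly
      (fun (n : ℕ) (p : EuclideanSpace ℝ (Fin N) × EuclideanSpace ℝ (Fin N)) =>
        (n : ℝ) * (Nn n (p.1 - p.2) ^ 2 - crysDist V hV p.1 p.2 ^ 2))
      (fun p => dist p.1 p.2 ^ 2) atTop)
    {ε : ℝ} (hε : 0 < ε) :
    ∃ M : ℕ, ∀ m, M ≤ m → ∀ x y : EuclideanSpace ℝ (Fin N),
      |(m:ℝ) * (Nn m (x - y) ^ 2 - crysDist V hV x y ^ 2) - ‖x - y‖ ^ 2| ≤ ε * ‖x - y‖ ^ 2 := by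
  have hK : IsCompact ((Metric.sphere (0 : EuclideanSpace ℝ (Fin N)) 1) ×ˢ
      ({0} : Set (EuclideanSpace ℝ (Fin N)))) :=
    (isCompact_sphere 0 1).prod isCompact_singleton
  have hU := (tendstoLocallyUniformly_iff_forall_isCompact.mp hrescconv) _ hK
  obtain ⟨M, hM⟩ := eventually_atTop.mp ((Metric.tendstoUniformlyOn_iff.mp hU) ε hε)
  refine ⟨M, fun m hm x y => ?_⟩
  by_cases hz : x - y = 0
  · rw [crysDist_diff, hz, crysDist_zero]
    simp [(hNn0 m 0).mpr rfl]
  · set z := x - y with hzdef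
    set u : EuclideanSpace ℝ (Fin N) := ‖z‖⁻¹ • z with hu
    have hu1 : ‖u‖ = 1 := by
      rw [hu, norm_smul, norm_inv, norm_norm, inv_mul_cancel₀ (norm_ne_zero_iff.mpr hz)]
    have hmem : (u, (0 : EuclideanSpace ℝ (Fin N))) ∈
        (Metric.sphere (0 : EuclideanSpace ℝ (Fin N)) 1) ×ˢ
          ({0} : Set (EuclideanSpace ℝ (Fin N))) :=
      ⟨mem_sphere_zero_iff_norm.mpr hu1, rfl⟩
    have hb := hM m hm (u, 0) hmem
    have hbu : |(m:ℝ) * (Nn m u ^ 2 - crysDist V hV u 0 ^ 2) - 1| < ε := by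
      have h1 : dist u (0 : EuclideanSpace ℝ (Fin N)) ^ 2 = 1 := by
        rw [dist_zero_right, hu1]; norm_num
      rw [Real.dist_eq, abs_sub_comm] at hb
      simpa [sub_zero, dist_zero_right, hu1] using hb
    have hzu : z = ‖z‖ • u := by
      rw [hu, smul_smul, mul_inv_cancel₀ (norm_ne_zero_iff.mpr hz), one_smul]
    have hNz : Nn m z = ‖z‖ * Nn m u := by
      conv_lhs => rw [hzu]
      rw [hNnabs, abs_norm]
    have hDz : crysDist V hV x y = ‖z‖ * crysDist V hV u 0 := by
      rw [crysDist_diff, ← hzdef]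
      conv_lhs => rw [hzu]
      exact crysDist_smul V hV _ (norm_nonneg z) u
    have hkey : (m:ℝ) * (Nn m z ^ 2 - crysDist V hV x y ^ 2) - ‖z‖ ^ 2 =
        ‖z‖ ^ 2 * ((m:ℝ) * (Nn m u ^ 2 - crysDist V hV u 0 ^ 2) - 1) := by
      rw [hNz, hDz]; ring
    rw [hkey, abs_mul, abs_of_nonneg (sq_nonneg ‖z‖)]
    calc ‖z‖ ^ 2 * |(m:ℝ) * (Nn m u ^ 2 - crysDist V hV u 0 ^ 2) - 1|
        ≤ ‖z‖ ^ 2 * ε := mul_le_mul_of_nonneg_left hbu.le (sq_nonneg _)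
      _ = ε * ‖z‖ ^ 2 := mul_comm _ _

/-- Approximating the crystalline distance `d` by smooth uniformly convex norm distances
`d_n` with `d_n ≤ H·d`, `d_n² → d²` locally uniformly and `n(d_n² − d²) → d_eu²` locally
uniformly with `n(d_n² − d²) ≤ 2 d_eu²`: every weak subsequential limit `π` of the unique
`d_n²`-optimal plans `π_n` between `μ, ν ∈ P_ac(ℝ^N)` is a minimizer of the secondary
variational problem. -/
theorem stmt19 {N : ℕ} (V : Finset (EuclideanSpace ℝ (Fin N))) (hV : V.Nonempty)
    (hVsymm : ∀ v ∈ V, -v ∈ V)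
    (hVspan : Submodule.span ℝ (V : Set (EuclideanSpace ℝ (Fin N))) = ⊤)
    (Nn : ℕ → EuclideanSpace ℝ (Fin N) → ℝ)
    (hNn0 : ∀ n x, Nn n x = 0 ↔ x = 0)
    (hNnabs : ∀ n (a : ℝ) x, Nn n (a • x) = |a| * Nn n x)
    (hNntri : ∀ n x y, Nn n (x + y) ≤ Nn n x + Nn n y)
    (hNnsmooth : ∀ n, ContDiffOn ℝ (⊤ : ℕ∞) (Nn n) {x | x ≠ 0})
    (kn : ℕ → ℝ) (hkn : ∀ n, 0 < kn n)
    (hNnconv : ∀ n (a b : EuclideanSpace ℝ (Fin N)), ∀ t ∈ Set.Icc (0:ℝ) 1,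
      Nn n ((1 - t) • a + t • b) ^ 2 ≤
        (1 - t) * Nn n a ^ 2 + t * Nn n b ^ 2 - kn n / 2 * t * (1 - t) * ‖a - b‖ ^ 2)
    (H : ℝ) (hH : 0 < H)
    (hdom : ∀ n x y, Nn n (x - y) ≤ H * crysDist V hV x y)
    (hsqconv : TendstoLocallyUniformly
      (fun n (p : EuclideanSpace ℝ (Fin N) × EuclideanSpace ℝ (Fin N)) => Nn n (p.1 - p.2) ^ 2)
      (fun p => crysDist V hV p.1 p.2 ^ 2) atTop)
    (hrescconv : TendstoLocallyUniformly
      (fun (n : ℕ) (p : EuclideanSpace ℝ (Fin N) × EuclideanSpace ℝ (Fin N)) =>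
        (n : ℝ) * (Nn n (p.1 - p.2) ^ 2 - crysDist V hV p.1 p.2 ^ 2))
      (fun p => dist p.1 p.2 ^ 2) atTop)
    (hrescdom : ∀ (n : ℕ) (p : EuclideanSpace ℝ (Fin N) × EuclideanSpace ℝ (Fin N)),
      (n : ℝ) * (Nn n (p.1 - p.2) ^ 2 - crysDist V hV p.1 p.2 ^ 2) ≤ 2 * dist p.1 p.2 ^ 2)
    (μ ν : Measure (EuclideanSpace ℝ (Fin N)))
    [IsProbabilityMeasure μ] [IsProbabilityMeasure ν]
    (hμ2 : ∫⁻ x, ENNReal.ofReal (dist x 0 ^ 2) ∂μ < ⊤)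
    (hν2 : ∫⁻ x, ENNReal.ofReal (dist x 0 ^ 2) ∂ν < ⊤)
    (hμac : μ ≪ volume) (hνac : ν ≪ volume)
    (πn : ℕ → Measure (EuclideanSpace ℝ (Fin N) × EuclideanSpace ℝ (Fin N)))
    (hπn : ∀ n, IsOptimalPlan (fun a b => ENNReal.ofReal (Nn n (a - b) ^ 2)) μ ν (πn n))
    (π : Measure (EuclideanSpace ℝ (Fin N) × EuclideanSpace ℝ (Fin N)))
    (hπc : IsCoupling π μ ν)
    (φ : ℕ → ℕ) (hφ : StrictMono φ)
    (hweak : ∀ f : BoundedContinuousFunction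
        (EuclideanSpace ℝ (Fin N) × EuclideanSpace ℝ (Fin N)) ℝ,
      Filter.Tendsto (fun n => ∫ p, f p ∂(πn (φ n))) Filter.atTop (nhds (∫ p, f p ∂π))) :
    Pi2 V hV μ ν π := by
  classical
  rw [Pi2, Pi1, IsOptimalPlan]
  have hprob : ∀ (π' : Measure (EuclideanSpace ℝ (Fin N) × EuclideanSpace ℝ (Fin N))),
      IsCoupling π' μ ν → IsProbabilityMeasure π' := by
    intro π' hπ'
    constructor
    have h1 : π'.map Prod.fst Set.univ = 1 := by rw [hπ'.1]; exact measure_univ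
    rwa [Measure.map_apply measurable_fst MeasurableSet.univ, Set.preimage_univ] at h1
  haveI hπprob : IsProbabilityMeasure π := hprob π hπc
  have hπnfin : ∀ m, IsFiniteMeasure (πn m) := fun m => by haveI := hprob _ (hπn m).1; infer_instance
  set S : ℝ≥0∞ := 2 * ((∫⁻ x, ENNReal.ofReal (dist x 0 ^ 2) ∂μ) +
      ∫⁻ y, ENNReal.ofReal (dist y 0 ^ 2) ∂ν) with hSdef
  have hSfin : S ≠ ⊤ := by
    rw [hSdef]
    exact ENNReal.mul_ne_top (by norm_num) (ENNReal.add_ne_top.mpr ⟨hμ2.ne, hν2.ne⟩)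
  have hmeas_e : Measurable fun p : (EuclideanSpace ℝ (Fin N)) × (EuclideanSpace ℝ (Fin N)) =>
      ENNReal.ofReal (dist p.1 p.2 ^ 2) :=
    ENNReal.measurable_ofReal.comp (((continuous_fst.dist continuous_snd).pow 2).measurable)
  -- moment bound for any coupling
  have hmom : ∀ (π' : Measure (EuclideanSpace ℝ (Fin N) × EuclideanSpace ℝ (Fin N))),
      IsCoupling π' μ ν → (∫⁻ p, ENNReal.ofReal (dist p.1 p.2 ^ 2) ∂π') ≤ S := by
    intro π' hπ'
    have hpt : ∀ p : (EuclideanSpace ℝ (Fin N)) × (EuclideanSpace ℝ (Fin N)),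
        ENNReal.ofReal (dist p.1 p.2 ^ 2) ≤
        2 * (ENNReal.ofReal (dist p.1 0 ^ 2) + ENNReal.ofReal (dist p.2 0 ^ 2)) := by
      intro p
      have h1 : dist p.1 p.2 ^ 2 ≤ 2 * (dist p.1 0 ^ 2 + dist p.2 0 ^ 2) := by
        have ht := dist_triangle p.1 (0 : EuclideanSpace ℝ (Fin N)) p.2
        have hd2 : dist (0 : EuclideanSpace ℝ (Fin N)) p.2 = dist p.2 0 := dist_comm _ _
        rw [hd2] at ht
        nlinarith [pow_le_pow_left₀ dist_nonneg ht 2,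
          sq_nonneg (dist p.1 0 - dist p.2 0)]
      calc ENNReal.ofReal (dist p.1 p.2 ^ 2)
          ≤ ENNReal.ofReal (2 * (dist p.1 0 ^ 2 + dist p.2 0 ^ 2)) := ENNReal.ofReal_le_ofReal h1
        _ = 2 * (ENNReal.ofReal (dist p.1 0 ^ 2) + ENNReal.ofReal (dist p.2 0 ^ 2)) := by
            rw [ENNReal.ofReal_mul (by norm_num),
              ENNReal.ofReal_add (by positivity) (by positivity)]
            norm_num
    have hmf : Measurable fun p : (EuclideanSpace ℝ (Fin N)) × (EuclideanSpace ℝ (Fin N)) =>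
        ENNReal.ofReal (dist p.1 0 ^ 2) :=
      ENNReal.measurable_ofReal.comp (((continuous_fst.dist continuous_const).pow 2).measurable)
    have hmg : Measurable fun x : EuclideanSpace ℝ (Fin N) => ENNReal.ofReal (dist x 0 ^ 2) :=
      ENNReal.measurable_ofReal.comp (((continuous_id.dist continuous_const).pow 2).measurable)
    calc (∫⁻ p, ENNReal.ofReal (dist p.1 p.2 ^ 2) ∂π')
        ≤ ∫⁻ p, 2 * (ENNReal.ofReal (dist p.1 0 ^ 2) + ENNReal.ofReal (dist p.2 0 ^ 2)) ∂π' :=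
          lintegral_mono hpt
      _ = 2 * ((∫⁻ p, ENNReal.ofReal (dist p.1 0 ^ 2) ∂π') +
            ∫⁻ p, ENNReal.ofReal (dist p.2 0 ^ 2) ∂π') := by
          rw [lintegral_const_mul' _ _ (by norm_num), lintegral_add_left hmf]
      _ = S := by
          rw [hSdef]
          congr 1
          congr 1
          · rw [← hπ'.1, lintegral_map hmg measurable_fst]
          · rw [← hπ'.2, lintegral_map hmg measurable_snd]
  -- crystalline cost facts
  have hccont : Continuous fun p : (EuclideanSpace ℝ (Fin N)) × (EuclideanSpace ℝ (Fin N)) =>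
      crysDist V hV p.1 p.2 ^ 2 := (crysDist_continuous V hV).pow 2
  have hmeas_cc : Measurable fun p : (EuclideanSpace ℝ (Fin N)) × (EuclideanSpace ℝ (Fin N)) =>
      ENNReal.ofReal (crysDist V hV p.1 p.2 ^ 2) :=
    ENNReal.measurable_ofReal.comp hccont.measurable
  set C : ℝ := V.sup' hV fun v => ‖v‖ with hCdef
  have hccfin : ∀ (π' : Measure (EuclideanSpace ℝ (Fin N) × EuclideanSpace ℝ (Fin N))),
      IsCoupling π' μ ν →
      (∫⁻ p, ENNReal.ofReal (crysDist V hV p.1 p.2 ^ 2) ∂π') ≠ ⊤ := by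
    intro π' hπ'
    have hpt : ∀ p : (EuclideanSpace ℝ (Fin N)) × (EuclideanSpace ℝ (Fin N)),
        ENNReal.ofReal (crysDist V hV p.1 p.2 ^ 2) ≤
        ENNReal.ofReal (C ^ 2) * ENNReal.ofReal (dist p.1 p.2 ^ 2) := by
      intro p
      rw [← ENNReal.ofReal_mul (sq_nonneg C)]
      apply ENNReal.ofReal_le_ofReal
      have h1 := crysDist_le V hV p.1 p.2
      have h2 := crysDist_nonneg V hV hVsymm p.1 p.2
      rw [dist_eq_norm]
      nlinarith [norm_nonneg (p.1 - p.2)]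
    have hb : (∫⁻ p, ENNReal.ofReal (crysDist V hV p.1 p.2 ^ 2) ∂π') ≤
        ENNReal.ofReal (C ^ 2) * S := by
      calc (∫⁻ p, ENNReal.ofReal (crysDist V hV p.1 p.2 ^ 2) ∂π')
          ≤ ∫⁻ p, ENNReal.ofReal (C ^ 2) * ENNReal.ofReal (dist p.1 p.2 ^ 2) ∂π' :=
            lintegral_mono hpt
        _ = ENNReal.ofReal (C ^ 2) * ∫⁻ p, ENNReal.ofReal (dist p.1 p.2 ^ 2) ∂π' :=
            lintegral_const_mul' _ _ ENNReal.ofReal_ne_top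
        _ ≤ _ := mul_le_mul_right (hmom π' hπ') _
    exact (lt_of_le_of_lt hb (ENNReal.mul_lt_top ENNReal.ofReal_lt_top hSfin.lt_top)).ne
  -- the main comparison chain
  have main : ∀ (π' : Measure (EuclideanSpace ℝ (Fin N) × EuclideanSpace ℝ (Fin N))),
      IsCoupling π' μ ν → ∀ ε : ℝ, 0 < ε → ε ≤ 1 →
      ∃ M : ℕ, 1 ≤ M ∧ ∀ m, M ≤ m →
      (∫⁻ p, ENNReal.ofReal (crysDist V hV p.1 p.2 ^ 2) ∂(πn m)) +
        ENNReal.ofReal ((1 - ε) / m) * ∫⁻ p, ENNReal.ofReal (dist p.1 p.2 ^ 2) ∂(πn m) ≤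
      (∫⁻ p, ENNReal.ofReal (crysDist V hV p.1 p.2 ^ 2) ∂π') +
        ENNReal.ofReal ((1 + ε) / m) * ∫⁻ p, ENNReal.ofReal (dist p.1 p.2 ^ 2) ∂π' := by
    intro π' hπ' ε hε hε1
    obtain ⟨M0, hM0⟩ := key_aux V hV Nn hNn0 hNnabs hrescconv hε
    refine ⟨max M0 1, le_max_right _ _, fun m hm => ?_⟩
    have hm1 : 1 ≤ m := le_trans (le_max_right _ _) hm
    have hmpos : (0:ℝ) < m := by exact_mod_cast hm1
    have hkey := hM0 m (le_trans (le_max_left _ _) hm)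
    have hlow : ∀ p : (EuclideanSpace ℝ (Fin N)) × (EuclideanSpace ℝ (Fin N)),
        ENNReal.ofReal (crysDist V hV p.1 p.2 ^ 2) +
          ENNReal.ofReal ((1 - ε) / m) * ENNReal.ofReal (dist p.1 p.2 ^ 2) ≤
        ENNReal.ofReal (Nn m (p.1 - p.2) ^ 2) := by
      intro p
      have hco : 0 ≤ (1 - ε) / (m:ℝ) := div_nonneg (by linarith) hmpos.le
      rw [← ENNReal.ofReal_mul hco, ← ENNReal.ofReal_add (sq_nonneg _)
        (mul_nonneg hco (sq_nonneg _))]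
      apply ENNReal.ofReal_le_ofReal
      have h1 := (abs_le.mp (hkey p.1 p.2)).1
      rw [dist_eq_norm]
      have h2 : (1 - ε) * ‖p.1 - p.2‖ ^ 2 ≤
          (m:ℝ) * (Nn m (p.1 - p.2) ^ 2 - crysDist V hV p.1 p.2 ^ 2) := by nlinarith
      have h3 := (div_le_div_iff_of_pos_right hmpos).mpr h2
      rw [mul_div_cancel_left₀ _ (ne_of_gt hmpos)] at h3
      have heq : (1 - ε) / (m:ℝ) * ‖p.1 - p.2‖ ^ 2 = (1 - ε) * ‖p.1 - p.2‖ ^ 2 / m := by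
        ring
      rw [heq]
      linarith
    have hup : ∀ p : (EuclideanSpace ℝ (Fin N)) × (EuclideanSpace ℝ (Fin N)),
        ENNReal.ofReal (Nn m (p.1 - p.2) ^ 2) ≤
        ENNReal.ofReal (crysDist V hV p.1 p.2 ^ 2) +
          ENNReal.ofReal ((1 + ε) / m) * ENNReal.ofReal (dist p.1 p.2 ^ 2) := by
      intro p
      have hco : 0 ≤ (1 + ε) / (m:ℝ) := div_nonneg (by linarith) hmpos.le
      rw [← ENNReal.ofReal_mul hco, ← ENNReal.ofReal_add (sq_nonneg _)
        (mul_nonneg hco (sq_nonneg _))]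
      apply ENNReal.ofReal_le_ofReal
      have h1 := (abs_le.mp (hkey p.1 p.2)).2
      rw [dist_eq_norm]
      have h2 : (m:ℝ) * (Nn m (p.1 - p.2) ^ 2 - crysDist V hV p.1 p.2 ^ 2) ≤
          (1 + ε) * ‖p.1 - p.2‖ ^ 2 := by nlinarith
      have h3 := (div_le_div_iff_of_pos_right hmpos).mpr h2
      rw [mul_div_cancel_left₀ _ (ne_of_gt hmpos)] at h3
      have heq : (1 + ε) / (m:ℝ) * ‖p.1 - p.2‖ ^ 2 = (1 + ε) * ‖p.1 - p.2‖ ^ 2 / m := by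
        ring
      rw [heq]
      linarith
    have hL : (∫⁻ p, ENNReal.ofReal (crysDist V hV p.1 p.2 ^ 2) ∂(πn m)) +
        ENNReal.ofReal ((1 - ε) / m) * ∫⁻ p, ENNReal.ofReal (dist p.1 p.2 ^ 2) ∂(πn m) ≤
        ∫⁻ p, ENNReal.ofReal (Nn m (p.1 - p.2) ^ 2) ∂(πn m) := by
      rw [← lintegral_const_mul' _ _ ENNReal.ofReal_ne_top, ← lintegral_add_left hmeas_cc]
      exact lintegral_mono hlow
    have hR : (∫⁻ p, ENNReal.ofReal (Nn m (p.1 - p.2) ^ 2) ∂π') ≤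
        (∫⁻ p, ENNReal.ofReal (crysDist V hV p.1 p.2 ^ 2) ∂π') +
          ENNReal.ofReal ((1 + ε) / m) * ∫⁻ p, ENNReal.ofReal (dist p.1 p.2 ^ 2) ∂π' := by
      rw [← lintegral_const_mul' _ _ ENNReal.ofReal_ne_top, ← lintegral_add_left hmeas_cc]
      exact lintegral_mono hup
    have hopt := (hπn m).2 π' hπ'
    simp only [transportCost] at hopt
    exact le_trans hL (le_trans hopt hR)
  constructor
  · -- π is a primary minimizer
    refine ⟨hπc, ?_⟩
    intro π' hπ'
    simp only [transportCost]
    have hlim : (∫⁻ p, ENNReal.ofReal (crysDist V hV p.1 p.2 ^ 2) ∂π) ≤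
        atTop.liminf fun k => ∫⁻ p, ENNReal.ofReal (crysDist V hV p.1 p.2 ^ 2) ∂(πn (φ k)) :=
      portmanteau_aux (fun k => πn (φ k)) π (fun k => hπnfin (φ k))
        (fun p => crysDist V hV p.1 p.2 ^ 2) hccont (fun p => sq_nonneg _) hweak
    obtain ⟨M, hM1, hM⟩ := main π' hπ' 1 one_pos le_rfl
    have hbound : ∀ k, M ≤ k →
        (∫⁻ p, ENNReal.ofReal (crysDist V hV p.1 p.2 ^ 2) ∂(πn (φ k))) ≤
        (∫⁻ p, ENNReal.ofReal (crysDist V hV p.1 p.2 ^ 2) ∂π') +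
          ENNReal.ofReal (2 / (k:ℝ)) * S := by
      intro k hk
      have hφk : M ≤ φ k := le_trans hk hφ.le_apply
      have h := hM (φ k) hφk
      simp only [sub_self, zero_div, ENNReal.ofReal_zero, zero_mul, add_zero] at h
      refine le_trans h (add_le_add_right ?_ _)
      have hkpos : (0:ℝ) < k := by
        have : 1 ≤ k := le_trans hM1 hk
        exact_mod_cast this
      have hφkk : (k:ℝ) ≤ (φ k : ℝ) := by exact_mod_cast hφ.le_apply
      refine mul_le_mul' (ENNReal.ofReal_le_ofReal ?_) (hmom π' hπ')
      have h12 : (1:ℝ) + 1 = 2 := by norm_num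
      rw [h12]
      exact div_le_div_of_nonneg_left (by norm_num) hkpos hφkk
    have htend : Tendsto (fun k : ℕ =>
        (∫⁻ p, ENNReal.ofReal (crysDist V hV p.1 p.2 ^ 2) ∂π') +
          ENNReal.ofReal (2 / (k:ℝ)) * S) atTop
        (𝓝 ((∫⁻ p, ENNReal.ofReal (crysDist V hV p.1 p.2 ^ 2) ∂π') + 0)) := by
      apply Tendsto.const_add
      have h0 : Tendsto (fun k : ℕ => ENNReal.ofReal (2 / (k:ℝ))) atTop (𝓝 0) := by
        have h1 := (ENNReal.continuous_ofReal.tendsto 0).comp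
          (tendsto_const_div_atTop_nhds_zero_nat 2)
        simpa [Function.comp_def] using h1
      simpa using ENNReal.Tendsto.mul_const h0 (Or.inr hSfin)
    refine le_trans hlim (le_trans (liminf_le_liminf (eventually_atTop.mpr ⟨M, hbound⟩)) ?_)
    rw [htend.liminf_eq, add_zero]
  · -- secondary minimality
    intro π' hπ'
    have hπ'c : IsCoupling π' μ ν := hπ'.1
    simp only [transportCost]
    have hE'fin : (∫⁻ p, ENNReal.ofReal (dist p.1 p.2 ^ 2) ∂π') ≠ ⊤ :=
      (lt_of_le_of_lt (hmom π' hπ'c) hSfin.lt_top).ne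
    have hlim : (∫⁻ p, ENNReal.ofReal (dist p.1 p.2 ^ 2) ∂π) ≤
        atTop.liminf fun k => ∫⁻ p, ENNReal.ofReal (dist p.1 p.2 ^ 2) ∂(πn (φ k)) :=
      portmanteau_aux (fun k => πn (φ k)) π (fun k => hπnfin (φ k))
        (fun p => dist p.1 p.2 ^ 2) ((continuous_fst.dist continuous_snd).pow 2)
        (fun p => sq_nonneg _) hweak
    have hεb : ∀ ε : ℝ, 0 < ε → ε < 1 →
        (∫⁻ p, ENNReal.ofReal (dist p.1 p.2 ^ 2) ∂π) ≤
        (ENNReal.ofReal (1 - ε))⁻¹ * (ENNReal.ofReal (1 + ε) *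
          ∫⁻ p, ENNReal.ofReal (dist p.1 p.2 ^ 2) ∂π') := by
      intro ε hε hε1
      obtain ⟨M, hM1, hM⟩ := main π' hπ'c ε hε hε1.le
      have hstep : ∀ m, M ≤ m →
          (∫⁻ p, ENNReal.ofReal (dist p.1 p.2 ^ 2) ∂(πn m)) ≤
          (ENNReal.ofReal (1 - ε))⁻¹ * (ENNReal.ofReal (1 + ε) *
            ∫⁻ p, ENNReal.ofReal (dist p.1 p.2 ^ 2) ∂π') := by
        intro m hm
        have h := hM m hm
        have hopt2 := hπ'.2 (πn m) (hπn m).1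
        simp only [transportCost] at hopt2
        have h2 : (∫⁻ p, ENNReal.ofReal (crysDist V hV p.1 p.2 ^ 2) ∂(πn m)) +
            ENNReal.ofReal ((1 - ε) / m) *
              ∫⁻ p, ENNReal.ofReal (dist p.1 p.2 ^ 2) ∂(πn m) ≤
            (∫⁻ p, ENNReal.ofReal (crysDist V hV p.1 p.2 ^ 2) ∂(πn m)) +
            ENNReal.ofReal ((1 + ε) / m) *
              ∫⁻ p, ENNReal.ofReal (dist p.1 p.2 ^ 2) ∂π' :=
          le_trans h (add_le_add_left hopt2 _)
        have h3 := (ENNReal.add_le_add_iff_left (hccfin _ (hπn m).1)).mp h2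
        have hm1 : (1:ℕ) ≤ m := le_trans hM1 hm
        have hmpos : (0:ℝ) < m := by exact_mod_cast hm1
        have hco1 : (1 - ε) / (m:ℝ) = 1 / m * (1 - ε) := by ring
        have hco2 : (1 + ε) / (m:ℝ) = 1 / m * (1 + ε) := by ring
        rw [hco1, hco2, ENNReal.ofReal_mul (by positivity), ENNReal.ofReal_mul (by positivity),
          mul_assoc, mul_assoc] at h3
        have h4 := (ENNReal.mul_le_mul_iff_right
          (a := ENNReal.ofReal (1 / (m:ℝ)))
          (by simp only [ne_eq, ENNReal.ofReal_eq_zero, not_le]; positivity)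
          ENNReal.ofReal_ne_top).mp h3
        calc (∫⁻ p, ENNReal.ofReal (dist p.1 p.2 ^ 2) ∂(πn m))
            = 1 * (∫⁻ p, ENNReal.ofReal (dist p.1 p.2 ^ 2) ∂(πn m)) := (one_mul _).symm
          _ = (ENNReal.ofReal (1 - ε))⁻¹ * ENNReal.ofReal (1 - ε) *
              (∫⁻ p, ENNReal.ofReal (dist p.1 p.2 ^ 2) ∂(πn m)) := by
              rw [ENNReal.inv_mul_cancel
                (by simp only [ne_eq, ENNReal.ofReal_eq_zero, not_le]; linarith)
                ENNReal.ofReal_ne_top]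
          _ = (ENNReal.ofReal (1 - ε))⁻¹ * (ENNReal.ofReal (1 - ε) *
              ∫⁻ p, ENNReal.ofReal (dist p.1 p.2 ^ 2) ∂(πn m)) := mul_assoc _ _ _
          _ ≤ _ := mul_le_mul_right h4 _
      refine le_trans hlim (le_trans (liminf_le_liminf (eventually_atTop.mpr
        ⟨M, fun k hk => hstep (φ k) (le_trans hk hφ.le_apply)⟩)) ?_)
      rw [liminf_const]
    have htends : Tendsto (fun j : ℕ =>
        (ENNReal.ofReal (1 - 1 / ((j:ℝ) + 2)))⁻¹ * (ENNReal.ofReal (1 + 1 / ((j:ℝ) + 2)) *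
          ∫⁻ p, ENNReal.ofReal (dist p.1 p.2 ^ 2) ∂π')) atTop
        (𝓝 (∫⁻ p, ENNReal.ofReal (dist p.1 p.2 ^ 2) ∂π')) := by
      have hj : Tendsto (fun j : ℕ => 1 / ((j:ℝ) + 2)) atTop (𝓝 0) := by
        have h1 := (tendsto_const_div_atTop_nhds_zero_nat (1:ℝ)).comp (tendsto_add_atTop_nat 2)
        have heq : (fun j : ℕ => 1 / (((j + 2 : ℕ)):ℝ)) = fun j : ℕ => 1 / ((j:ℝ) + 2) := by
          funext j; push_cast; ring
        rwa [Function.comp_def, heq] at h1  -- adjust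
      have hone : Tendsto (fun j : ℕ => ENNReal.ofReal (1 - 1 / ((j:ℝ) + 2))) atTop
          (𝓝 (ENNReal.ofReal 1)) :=
        (ENNReal.continuous_ofReal.tendsto 1).comp (by simpa using (tendsto_const_nhds.sub hj))
      have hone' : Tendsto (fun j : ℕ => ENNReal.ofReal (1 + 1 / ((j:ℝ) + 2))) atTop
          (𝓝 (ENNReal.ofReal 1)) :=
        (ENNReal.continuous_ofReal.tendsto 1).comp (by simpa using (tendsto_const_nhds.add hj))
      have hinv : Tendsto (fun j : ℕ => (ENNReal.ofReal (1 - 1 / ((j:ℝ) + 2)))⁻¹) atTop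
          (𝓝 1) := by
        have := ENNReal.tendsto_inv_iff.mpr hone
        simpa using this
      have hmul1 : Tendsto (fun j : ℕ => ENNReal.ofReal (1 + 1 / ((j:ℝ) + 2)) *
          ∫⁻ p, ENNReal.ofReal (dist p.1 p.2 ^ 2) ∂π') atTop
          (𝓝 (∫⁻ p, ENNReal.ofReal (dist p.1 p.2 ^ 2) ∂π')) := by
        have := ENNReal.Tendsto.mul_const hone' (Or.inr hE'fin)
        simpa using this
      have := ENNReal.Tendsto.mul hinv (Or.inl one_ne_zero) hmul1 (Or.inr ENNReal.one_ne_top)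
      simpa using this
    refine ge_of_tendsto' htends fun j => ?_
    exact hεb (1 / ((j:ℝ) + 2)) (by positivity) (by
      rw [div_lt_one (by positivity)]
      have : (0:ℝ) ≤ (j:ℝ) := Nat.cast_nonneg j
      linarith)
end
end
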